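/- Let p₁,…,pₙ ∈ ℝ² and lines ℓ₁,…,ℓₙ in ℝ², and let v be a fixed unit vector. For each i ∈ [n] let λᵢ ∈ ℝ ∪ {∞} be the minimal-magnitude scalar such that dist(pᵢ − λᵢ·v, ℓᵢ) is minimized over λ ∈ ℝ (λᵢ = ∞ if the minimizing set is infinite), and assume some λᵢ is finite. Let k ∈ argmin_{i} |λᵢ|. Then for every i ∈ [n], dist(pᵢ − λₖ·v, ℓᵢ) ≤ 2·dist(pᵢ, ℓᵢ). -/

import Mathlib

lemma key12 (a d x : EuclideanSpace ℝ (Fin 2)) (hd : ‖d‖ = 1) :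
    Metric.infDist x {q | ∃ s : ℝ, q = a + s • d}
      = |(x 0 - a 0) * (-(d 1)) + (x 1 - a 1) * (d 0)| := by
  have hd2 : d 0 ^ 2 + d 1 ^ 2 = 1 := by
    have := hd
    rw [EuclideanSpace.norm_eq] at this
    have h' : Real.sqrt (‖d 0‖ ^ 2 + ‖d 1‖ ^ 2) = 1 := by
      simpa [Fin.sum_univ_two] using this
    have := congrArg (· ^ 2) h'
    simp only [one_pow] at this
    rw [Real.sq_sqrt (by positivity)] at this
    simpa [sq_abs] using this
  set u0 := x 0 - a 0 with hu0
  set u1 := x 1 - a 1 with hu1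
  set B := u0 * (-(d 1)) + u1 * (d 0) with hB
  set s₀ := u0 * d 0 + u1 * d 1 with hs₀
  have hdist : ∀ s : ℝ, dist x (a + s • d)
      = Real.sqrt ((u0 - s * d 0) ^ 2 + (u1 - s * d 1) ^ 2) := by
    intro s
    rw [EuclideanSpace.dist_eq, Fin.sum_univ_two]
    congr 1
    · congr 1 <;> rw [Real.dist_eq, sq_abs] <;>
        simp [hu0, hu1, PiLp.add_apply, PiLp.smul_apply, smul_eq_mul] <;> ring
  have hlow : ∀ s : ℝ, |B| ≤ dist x (a + s • d) := by
    intro s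
    rw [hdist s, Real.le_sqrt (abs_nonneg _), sq_abs, hB]
    have hid : (u0 - s * d 0) ^ 2 + (u1 - s * d 1) ^ 2
        = (u0 * (-(d 1)) + u1 * (d 0)) ^ 2 + (s - (u0 * d 0 + u1 * d 1)) ^ 2 := by
      linear_combination (s ^ 2 - u0 ^ 2 - u1 ^ 2) * hd2
    rw [hid]
    nlinarith [sq_nonneg (s - (u0 * d 0 + u1 * d 1))]
    positivity
  have hne : Set.Nonempty {q : EuclideanSpace ℝ (Fin 2) | ∃ s : ℝ, q = a + s • d} :=
    ⟨a + (0:ℝ) • d, ⟨0, rfl⟩⟩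
  apply le_antisymm
  · have hmem : a + s₀ • d ∈ {q : EuclideanSpace ℝ (Fin 2) | ∃ s : ℝ, q = a + s • d} := ⟨s₀, rfl⟩
    calc Metric.infDist x _ ≤ dist x (a + s₀ • d) := Metric.infDist_le_dist_of_mem hmem
    _ = |B| := by
        rw [hdist s₀]
        rw [show (u0 - s₀ * d 0) ^ 2 + (u1 - s₀ * d 1) ^ 2 = B ^ 2 by
          rw [hB, hs₀]; linear_combination ((u0 * d 0 + u1 * d 1)^2 - u0^2 - u1^2) * hd2]
        rw [Real.sqrt_sq_eq_abs]
  · by_contra hcon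
    rw [not_le, Metric.infDist_lt_iff hne] at hcon
    obtain ⟨y, ⟨s, rfl⟩, hy⟩ := hcon
    exact absurd (hlow s) (not_le.mpr hy)

/-- Step 2 of points-to-lines alignment. For each `i`, let `Λ i` be the set of
scalars `μ` minimizing `dist(pᵢ − μ v, ℓᵢ)` over `μ ∈ ℝ`; call `i` *finite* if
`Λ i` is finite, and in that case let `λ i ∈ Λ i` have minimal magnitude.
If some index is finite and `k` is a finite index minimizing `|λ i|`, then
translating by `λ k • v` at most doubles every point-to-line distance. -/
theorem stmt12 (n : ℕ)
    (p : Fin n → EuclideanSpace ℝ (Fin 2))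
    (ℓ : Fin n → Set (EuclideanSpace ℝ (Fin 2)))
    (hline : ∀ i, ∃ a d : EuclideanSpace ℝ (Fin 2), ‖d‖ = 1 ∧
      ℓ i = {q | ∃ s : ℝ, q = a + s • d})
    (v : EuclideanSpace ℝ (Fin 2)) (hv : ‖v‖ = 1)
    (Λ : Fin n → Set ℝ)
    (hΛ : ∀ i, Λ i = {μ | ∀ μ' : ℝ,
      Metric.infDist (p i - μ • v) (ℓ i) ≤ Metric.infDist (p i - μ' • v) (ℓ i)})
    (lam : Fin n → ℝ)
    (hlam : ∀ i, (Λ i).Finite → lam i ∈ Λ i ∧ ∀ μ ∈ Λ i, |lam i| ≤ |μ|)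
    (k : Fin n) (hkfin : (Λ k).Finite)
    (hk : ∀ i, (Λ i).Finite → |lam k| ≤ |lam i|) :
    ∀ i, Metric.infDist (p i - lam k • v) (ℓ i) ≤
      2 * Metric.infDist (p i) (ℓ i) := by
  intro i
  obtain ⟨a, d, hd, hℓi⟩ := hline i
  set B := (p i 0 - a 0) * (-(d 1)) + (p i 1 - a 1) * (d 0) with hB
  set C := (v 0) * (-(d 1)) + (v 1) * (d 0) with hC
  have hdist : ∀ μ : ℝ, Metric.infDist (p i - μ • v) (ℓ i) = |B - μ * C| := by
    intro μ
    rw [hℓi, key12 a d _ hd]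
    congr 1
    simp only [hB, hC, PiLp.sub_apply, PiLp.smul_apply, smul_eq_mul]
    ring
  have h0 : Metric.infDist (p i) (ℓ i) = |B| := by
    have h := hdist 0
    simpa using h
  rw [hdist (lam k), h0]
  by_cases hC0 : C = 0
  · rw [hC0]
    simp only [mul_zero, sub_zero]
    nlinarith [abs_nonneg B]
  · -- Λ i = {B / C}
    have hΛi : Λ i = {B / C} := by
      ext μ
      rw [hΛ i, Set.mem_singleton_iff]
      simp only [Set.mem_setOf_eq]
      constructor
      · intro h
        have h1 := h (B / C)
        rw [hdist μ, hdist (B / C)] at h1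
        have h2 : B - (B / C) * C = 0 := by field_simp; ring
        rw [h2, abs_zero] at h1
        have h3 : B - μ * C = 0 := abs_nonpos_iff.mp h1
        field_simp
        linarith [h3]
      · rintro rfl
        intro μ'
        rw [hdist _, hdist μ']
        have h2 : B - (B / C) * C = 0 := by field_simp; ring
        rw [h2, abs_zero]
        exact abs_nonneg _
    have hfin : (Λ i).Finite := by rw [hΛi]; exact Set.finite_singleton _
    have hlami : lam i = B / C := by
      have := (hlam i hfin).1
      rwa [hΛi, Set.mem_singleton_iff] at this
    have hkle : |lam k| ≤ |B| / |C| := by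
      have := hk i hfin
      rwa [hlami, abs_div] at this
    have hCpos : 0 < |C| := abs_pos.mpr hC0
    calc |B - lam k * C| ≤ |B| + |lam k| * |C| := by
          calc |B - lam k * C| ≤ |B| + |lam k * C| := abs_sub _ _
          _ = |B| + |lam k| * |C| := by rw [abs_mul]
    _ ≤ |B| + (|B| / |C|) * |C| := by
          gcongr
    _ = 2 * |B| := by field_simp; ring
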